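/- arXiv:2404.10995 — 4 statements merged into one kernel-verified Lean document; each statement's English description precedes it below -/
import Mathlib

section
/- Let 0 < p < 1/2, a > 0, b > 0, c > 0 and β ≥ 0 with a·β < 1 and a·b ≥ 2c. Define clip_c : ℝ → ℝ by clip_c(u) = min{1, c/|u|}·u for u ≠ 0 and clip_c(0) = 0. Then θ_∞ := −p·c / ((1−p)·(1−aβ)) is the unique real number θ satisfying p·clip_c((1−aβ)·θ + ab) + (1−p)·clip_c((1−aβ)·θ) = 0. -/
open scoped Classical in
/-- The scalar clipping operator `clip_c(u) = min{1, c/|u|} * u` for `u ≠ 0`,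
and `clip_c 0 = 0`. -/
noncomputable def clipR (c u : ℝ) : ℝ :=
  if u = 0 then 0 else min 1 (c / |u|) * u

lemma clipR_of_abs_le {c u : ℝ} (h : |u| ≤ c) : clipR c u = u := by
  unfold clipR
  split_ifs with h0
  · simp [h0]
  · have hu : 0 < |u| := abs_pos.mpr h0
    have : (1 : ℝ) ≤ c / |u| := (one_le_div hu).mpr h
    rw [min_eq_left this, one_mul]

lemma clipR_of_le {c u : ℝ} (hc : 0 < c) (h : c ≤ u) : clipR c u = c := by
  have hu : 0 < u := lt_of_lt_of_le hc h
  unfold clipR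
  rw [if_neg hu.ne', abs_of_pos hu]
  have : c / u ≤ 1 := (div_le_one hu).mpr h
  rw [min_eq_right this, div_mul_cancel₀ _ hu.ne']

lemma clipR_of_le_neg {c u : ℝ} (hc : 0 < c) (h : u ≤ -c) : clipR c u = -c := by
  have hu : u < 0 := lt_of_le_of_lt h (by linarith)
  unfold clipR
  rw [if_neg hu.ne, abs_of_neg hu]
  have h' : c ≤ -u := by linarith
  have : c / (-u) ≤ 1 := (div_le_one (by linarith)).mpr h'
  rw [min_eq_right this]
  rw [div_mul_eq_mul_div, mul_comm, ← div_mul_eq_mul_div,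
    div_neg, div_self hu.ne, neg_one_mul]

lemma clipR_nonneg {c u : ℝ} (hc : 0 < c) (h : 0 ≤ u) : 0 ≤ clipR c u := by
  unfold clipR
  split_ifs with h0
  · exact le_refl 0
  · exact mul_nonneg (le_min zero_le_one (div_nonneg hc.le (abs_nonneg u))) h

lemma clipR_le {c u : ℝ} (hc : 0 < c) : clipR c u ≤ c := by
  unfold clipR
  split_ifs with h0
  · exact hc.le
  · rcases lt_or_gt_of_ne h0 with hu | hu
    · have : min 1 (c / |u|) * u ≤ 0 :=
        mul_nonpos_of_nonneg_of_nonpos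
          (le_min zero_le_one (div_nonneg hc.le (abs_nonneg u))) hu.le
      linarith
    · calc min 1 (c / |u|) * u ≤ (c / |u|) * u :=
            mul_le_mul_of_nonneg_right (min_le_right _ _) hu.le
        _ = c := by rw [abs_of_pos hu]; field_simp

/-- Fixed-point construction of Theorem 2: `θ_∞ = -pc/((1-p)(1-aβ))` is the
unique real solution of `p·clip_c((1-aβ)θ + ab) + (1-p)·clip_c((1-aβ)θ) = 0`. -/
theorem stmt_4 (p a b c β : ℝ) (hp0 : 0 < p) (hp : p < 1 / 2) (ha : 0 < a)
    (hb : 0 < b) (hc : 0 < c) (hβ : 0 ≤ β) (haβ : a * β < 1) (hab : 2 * c ≤ a * b) :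
    ∀ θ : ℝ,
      (p * clipR c ((1 - a * β) * θ + a * b) + (1 - p) * clipR c ((1 - a * β) * θ) = 0)
        ↔ θ = -(p * c) / ((1 - p) * (1 - a * β)) := by
  intro θ
  have hs : 0 < 1 - a * β := by linarith
  have hq : 0 < 1 - p := by linarith
  set x := (1 - a * β) * θ with hx
  constructor
  · intro heq
    -- case analysis on x
    rcases le_or_gt 0 x with hx0 | hx0
    · -- x ≥ 0 : impossible
      have h1 : clipR c (x + a * b) = c := clipR_of_le hc (by linarith)
      have h2 : 0 ≤ clipR c x := clipR_nonneg hc hx0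
      nlinarith
    · rcases le_or_gt x (-c) with hxc | hxc
      · -- x ≤ -c : impossible
        have h1 : clipR c x = -c := clipR_of_le_neg hc hxc
        have h2 : clipR c (x + a * b) ≤ c := clipR_le hc
        nlinarith
      · -- -c < x < 0
        have h1 : clipR c (x + a * b) = c := clipR_of_le hc (by linarith)
        have h2 : clipR c x = x := clipR_of_abs_le (by rw [abs_of_neg hx0]; linarith)
        rw [h1, h2] at heq
        have hxval : x = -(p * c) / (1 - p) := by field_simp; linarith
        rw [hx] at hxval
        field_simp at hxval ⊢
        linarith [hxval]
  · intro hθ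
    subst hθ
    have hxval : x = -(p * c) / (1 - p) := by
      rw [hx]; field_simp
    have hx1 : -c < x := by
      rw [hxval, lt_div_iff₀ hq]
      nlinarith
    have hx0 : x < 0 := by
      rw [hxval]
      apply div_neg_of_neg_of_pos (by nlinarith) hq
    have h1 : clipR c (x + a * b) = c := clipR_of_le hc (by linarith)
    have h2 : clipR c x = x := clipR_of_abs_le (by rw [abs_of_neg hx0]; linarith)
    rw [h1, h2, hxval]
    field_simp
    ring
end

section
/- Let 0 < p < 1/2, a > 0, b > 0, c > 0 and β ≥ 0 with a·β < 1 and a·b ≥ 2c. Set θ_PS := −p·a·b/(1−aβ) and θ_∞ := −p·c/((1−p)·(1−aβ)). Then: (i) θ_PS is the unique real number θ satisfying θ + a·(b·p − β·θ) = 0; and (ii) (θ_∞ − θ_PS)² = (p/(1−aβ))² · (a·b − c/(1−p))², and this quantity is strictly greater than (p·(a·b − 2c)/(1−aβ))². -/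
/-- Quantitative content of Theorem 2 (lower bound on the clipping bias):
`θ_PS = -pab/(1-aβ)` is the unique solution of `θ + a(bp - βθ) = 0`, and the
squared gap `(θ_∞ - θ_PS)²` equals `(p/(1-aβ))²(ab - c/(1-p))²`, which is
strictly greater than `(p(ab - 2c)/(1-aβ))²`. -/
theorem stmt_5 (p a b c β : ℝ) (hp0 : 0 < p) (hp : p < 1 / 2) (ha : 0 < a)
    (hb : 0 < b) (hc : 0 < c) (hβ : 0 ≤ β) (haβ : a * β < 1) (hab : 2 * c ≤ a * b) :
    (∀ θ : ℝ, θ + a * (b * p - β * θ) = 0 ↔ θ = -(p * a * b) / (1 - a * β)) ∧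
    (-(p * c) / ((1 - p) * (1 - a * β)) - -(p * a * b) / (1 - a * β)) ^ 2
        = (p / (1 - a * β)) ^ 2 * (a * b - c / (1 - p)) ^ 2 ∧
    (p * (a * b - 2 * c) / (1 - a * β)) ^ 2
        < (p / (1 - a * β)) ^ 2 * (a * b - c / (1 - p)) ^ 2 := by
  have h1 : 0 < 1 - a * β := by linarith
  have h2 : 0 < 1 - p := by linarith
  refine ⟨fun θ => ?_, ?_, ?_⟩
  · rw [eq_div_iff (ne_of_gt h1)]
    constructor <;> intro h <;> nlinarith [h]
  · field_simp
    ring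
  · have hlt : c / (1 - p) < 2 * c := by
      rw [div_lt_iff₀ h2]; nlinarith
    have hnn : 0 ≤ a * b - 2 * c := by linarith
    have key : (a * b - 2 * c) ^ 2 < (a * b - c / (1 - p)) ^ 2 := by
      apply pow_lt_pow_left₀ _ hnn (by norm_num)
      linarith
    have hp2 : 0 < (p / (1 - a * β)) ^ 2 := by positivity
    calc (p * (a * b - 2 * c) / (1 - a * β)) ^ 2
        = (p / (1 - a * β)) ^ 2 * (a * b - 2 * c) ^ 2 := by ring
      _ < (p / (1 - a * β)) ^ 2 * (a * b - c / (1 - p)) ^ 2 := by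
          exact mul_lt_mul_of_pos_left key hp2
end

section
/- Let μ̃ > 0, c₁ ≥ 0, C₁ ≥ 0, and let (γ_t)_{t≥1} be a non-increasing sequence of positive reals with γ_1 < 2/μ̃, γ_t ≤ 1/μ̃ for all t ≥ 1, and γ_t/γ_{t+1} ≤ 1 + (μ̃/2)·γ_{t+1} for all t ≥ 1. Let (u_t)_{t≥0} be non-negative reals satisfying u_{t+1} ≤ (1 − μ̃·γ_{t+1})·u_t + c₁·γ_{t+1}² + (4C₁/μ̃)·γ_{t+1} for all t ≥ 0. Then for every t ≥ 0, u_{t+1} ≤ (∏_{i=1}^{t+1} (1 − μ̃·γ_i))·u_0 + (2c₁/μ̃)·γ_{t+1} + 8C₁/μ̃². -/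
/-- Deterministic recursion behind Theorem 1 (PCSGD, strongly convex case):
a recursion `u_{t+1} ≤ (1 - μ̃γ_{t+1}) u_t + c₁ γ_{t+1}² + (4C₁/μ̃) γ_{t+1}`
with admissible step sizes yields
`u_{t+1} ≤ (∏_{i=1}^{t+1} (1 - μ̃ γ_i)) u_0 + (2c₁/μ̃) γ_{t+1} + 8C₁/μ̃²`. -/
theorem stmt_6 (μs c₁ C₁ : ℝ) (hμ : 0 < μs) (hc₁ : 0 ≤ c₁) (hC₁ : 0 ≤ C₁)
    (γ : ℕ → ℝ) (hpos : ∀ t, 1 ≤ t → 0 < γ t)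
    (hmono : ∀ t, 1 ≤ t → γ (t + 1) ≤ γ t)
    (hinit : γ 1 < 2 / μs)
    (hbd : ∀ t, 1 ≤ t → γ t ≤ 1 / μs)
    (hratio : ∀ t, 1 ≤ t → γ t / γ (t + 1) ≤ 1 + (μs / 2) * γ (t + 1))
    (u : ℕ → ℝ) (hu : ∀ t, 0 ≤ u t)
    (hrec : ∀ t : ℕ, u (t + 1) ≤
      (1 - μs * γ (t + 1)) * u t + c₁ * γ (t + 1) ^ 2 + (4 * C₁ / μs) * γ (t + 1)) :
    ∀ t : ℕ, u (t + 1) ≤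
      (∏ i ∈ Finset.Icc 1 (t + 1), (1 - μs * γ i)) * u 0
        + (2 * c₁ / μs) * γ (t + 1) + 8 * C₁ / μs ^ 2 := by
  have hfac : ∀ i, 1 ≤ i → 0 ≤ 1 - μs * γ i := by
    intro i hi
    have h := hbd i hi
    have h2 := mul_le_mul_of_nonneg_left h hμ.le
    rw [mul_one_div, div_self hμ.ne'] at h2
    linarith
  intro t
  induction t with
  | zero =>
    have h := hrec 0
    simp only [Finset.Icc_self, Finset.prod_singleton]
    have h1 : γ 1 ≤ 1 / μs := hbd 1 le_rfl
    have hp1 : 0 < γ 1 := hpos 1 le_rfl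
    have hμγ : μs * γ 1 ≤ 1 := by
      have h2 := mul_le_mul_of_nonneg_left h1 hμ.le
      rw [mul_one_div, div_self hμ.ne'] at h2
      linarith
    have hA : c₁ * γ 1 ^ 2 ≤ (2 * c₁ / μs) * γ 1 := by
      rw [div_mul_eq_mul_div, le_div_iff₀ hμ]
      nlinarith [mul_nonneg hc₁ hp1.le]
    have hB : (4 * C₁ / μs) * γ 1 ≤ 8 * C₁ / μs ^ 2 := by
      rw [div_mul_eq_mul_div, div_le_div_iff₀ hμ (by positivity)]
      nlinarith [mul_nonneg (mul_nonneg hC₁ hμ.le) hμ.le]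
    calc u 1 ≤ (1 - μs * γ 1) * u 0 + c₁ * γ 1 ^ 2 + (4 * C₁ / μs) * γ 1 := h
      _ ≤ (1 - μs * γ 1) * u 0 + (2 * c₁ / μs) * γ 1 + 8 * C₁ / μs ^ 2 := by
          linarith
  | succ t ih =>
    have hP : 0 ≤ ∏ i ∈ Finset.Icc 1 (t + 1), (1 - μs * γ i) :=
      Finset.prod_nonneg fun i hi => hfac i (Finset.mem_Icc.mp hi).1
    have hf2 : 0 ≤ 1 - μs * γ (t + 2) := hfac (t + 2) (by omega)
    have hp2 : 0 < γ (t + 2) := hpos (t + 2) (by omega)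
    have hp1 : 0 < γ (t + 1) := hpos (t + 1) (by omega)
    have hr : γ (t + 1) ≤ γ (t + 2) * (1 + (μs / 2) * γ (t + 2)) := by
      have := hratio (t + 1) (by omega)
      rw [div_le_iff₀ hp2] at this
      linarith [this]
    have hprod : ∏ i ∈ Finset.Icc 1 (t + 2), (1 - μs * γ i)
        = (∏ i ∈ Finset.Icc 1 (t + 1), (1 - μs * γ i)) * (1 - μs * γ (t + 2)) := by
      rw [Finset.prod_Icc_succ_top (by omega : 1 ≤ t + 2)]
    have h := hrec (t + 1)
    set P := ∏ i ∈ Finset.Icc 1 (t + 1), (1 - μs * γ i) with hPdef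
    have key : u (t + 2) ≤ (1 - μs * γ (t + 2)) *
        (P * u 0 + (2 * c₁ / μs) * γ (t + 1) + 8 * C₁ / μs ^ 2)
        + c₁ * γ (t + 2) ^ 2 + (4 * C₁ / μs) * γ (t + 2) := by
      have := mul_le_mul_of_nonneg_left ih hf2
      linarith
    rw [hprod]
    have hA : (1 - μs * γ (t + 2)) * ((2 * c₁ / μs) * γ (t + 1)) + c₁ * γ (t + 2) ^ 2
        ≤ (2 * c₁ / μs) * γ (t + 2) := by
      have hAnn : 0 ≤ 2 * c₁ / μs := by positivity
      have step1 : (1 - μs * γ (t + 2)) * ((2 * c₁ / μs) * γ (t + 1))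
          ≤ (2 * c₁ / μs) * (γ (t + 2) * (1 + (μs / 2) * γ (t + 2)) * (1 - μs * γ (t + 2))) := by
        have := mul_le_mul_of_nonneg_left hr hAnn
        nlinarith
      have step2 : (2 * c₁ / μs) * (γ (t + 2) * (1 + (μs / 2) * γ (t + 2)) * (1 - μs * γ (t + 2)))
          ≤ (2 * c₁ / μs) * (γ (t + 2) * (1 - (μs / 2) * γ (t + 2))) := by
        apply mul_le_mul_of_nonneg_left _ hAnn
        nlinarith [mul_nonneg hp2.le (sq_nonneg (μs * γ (t + 2)))]
      have hc : (2 * c₁ / μs) * (μs / 2) = c₁ := by field_simp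
      nlinarith [step1, step2]
    have hB : (1 - μs * γ (t + 2)) * (8 * C₁ / μs ^ 2) + (4 * C₁ / μs) * γ (t + 2)
        ≤ 8 * C₁ / μs ^ 2 := by
      have h1 : μs * γ (t + 2) * (8 * C₁ / μs ^ 2) = (8 * C₁ / μs) * γ (t + 2) := by
        field_simp
      have h2 : 0 ≤ (4 * C₁ / μs) * γ (t + 2) := by positivity
      have h3 : 8 * C₁ / μs * γ (t + 2) = 2 * ((4 * C₁ / μs) * γ (t + 2)) := by ring
      linarith [h1, h3]
    calc u (t + 2) ≤ (1 - μs * γ (t + 2)) *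
          (P * u 0 + (2 * c₁ / μs) * γ (t + 1) + 8 * C₁ / μs ^ 2)
          + c₁ * γ (t + 2) ^ 2 + (4 * C₁ / μs) * γ (t + 2) := key
      _ = (1 - μs * γ (t + 2)) * P * u 0
          + ((1 - μs * γ (t + 2)) * ((2 * c₁ / μs) * γ (t + 1)) + c₁ * γ (t + 2) ^ 2)
          + ((1 - μs * γ (t + 2)) * (8 * C₁ / μs ^ 2) + (4 * C₁ / μs) * γ (t + 2)) := by
          ring
      _ ≤ P * (1 - μs * γ (t + 2)) * u 0 + (2 * c₁ / μs) * γ (t + 2)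
          + 8 * C₁ / μs ^ 2 := by
          have heq : (1 - μs * γ (t + 2)) * P * u 0 = P * (1 - μs * γ (t + 2)) * u 0 := by ring
          linarith [hA, hB]
end

section
/- Let μ be a probability measure on a measurable space Z, let g : Z → ℝ^d be strongly measurable with ‖g(z)‖ ≤ G for μ-almost every z, where G ≥ 0, let c > 0, and set u := ∫ g(z) dμ(z) and w := ∫ clip_c(g(z)) dμ(z). Then ⟨u, w⟩ ≥ (1/2)·‖u‖² − 2·(max(G − c, 0))². -/
open MeasureTheory
open scoped RealInnerProductSpace

open scoped Classical in
/-- The clipping operator on a normed space: `clip_c(g) = min{1, c/‖g‖} • g` for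
`g ≠ 0`, and `clip_c 0 = 0`. -/
noncomputable def clip {E : Type*} [NormedAddCommGroup E] [NormedSpace ℝ E]
    (c : ℝ) (g : E) : E :=
  if g = 0 then 0 else min 1 (c / ‖g‖) • g

lemma clip_eq_smul {E : Type*} [NormedAddCommGroup E] [NormedSpace ℝ E]
    (c : ℝ) (x : E) : clip c x = min 1 (c / ‖x‖) • x := by
  by_cases h : x = 0 <;> simp [clip, h]

lemma norm_clip_le {E : Type*} [NormedAddCommGroup E] [NormedSpace ℝ E]
    {c : ℝ} (hc : 0 < c) (x : E) : ‖clip c x‖ ≤ ‖x‖ := by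
  rw [clip_eq_smul, norm_smul]
  have h0 : 0 ≤ c / ‖x‖ := div_nonneg hc.le (norm_nonneg x)
  have h1 : |min 1 (c / ‖x‖)| ≤ 1 := by
    rw [abs_of_nonneg (le_min zero_le_one h0)]
    exact min_le_left _ _
  calc |min 1 (c / ‖x‖)| * ‖x‖ ≤ 1 * ‖x‖ := by
        exact mul_le_mul_of_nonneg_right h1 (norm_nonneg x)
    _ = ‖x‖ := one_mul _

lemma norm_clip_sub {E : Type*} [NormedAddCommGroup E] [NormedSpace ℝ E]
    {c : ℝ} (hc : 0 < c) (x : E) : ‖clip c x - x‖ ≤ max (‖x‖ - c) 0 := by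
  rw [clip_eq_smul]
  by_cases h : ‖x‖ ≤ c
  · have hx : min 1 (c / ‖x‖) • x = x := by
      by_cases h0 : x = 0
      · simp [h0]
      · have : (1 : ℝ) ≤ c / ‖x‖ :=
          (one_le_div (norm_pos_iff.mpr h0)).mpr h
        rw [min_eq_left this, one_smul]
    simp [hx, le_max_right]
  · push_neg at h
    have hx0 : (0:ℝ) < ‖x‖ := lt_trans hc h
    have hmin : min 1 (c / ‖x‖) = c / ‖x‖ :=
      min_eq_right ((div_le_one hx0).mpr h.le)
    rw [hmin]
    have : (c / ‖x‖) • x - x = (c / ‖x‖ - 1) • x := by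
      rw [sub_smul, one_smul]
    rw [this, norm_smul, Real.norm_eq_abs]
    have habs : |c / ‖x‖ - 1| = 1 - c / ‖x‖ := by
      rw [abs_of_nonpos (by
        have := (div_le_one hx0).mpr h.le; linarith)]
      ring
    rw [habs]
    have : (1 - c / ‖x‖) * ‖x‖ = ‖x‖ - c := by
      field_simp
    rw [this]
    exact le_max_left _ _

/-- Inner-product lower bound from the proof of Theorem 3: with
`u = ∫ g dμ` and `w = ∫ clip_c(g) dμ`, if `‖g z‖ ≤ G` a.e. then
`⟪u, w⟫ ≥ (1/2)‖u‖² - 2 (max (G - c) 0)²`. -/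
theorem stmt_13 {Z : Type*} [MeasurableSpace Z] (μ : Measure Z) [IsProbabilityMeasure μ]
    {d : ℕ} (g : Z → EuclideanSpace ℝ (Fin d)) (hg : StronglyMeasurable g)
    (G : ℝ) (hG : 0 ≤ G) (hbd : ∀ᵐ z ∂μ, ‖g z‖ ≤ G)
    (c : ℝ) (hc : 0 < c) :
    (1 / 2) * ‖∫ z, g z ∂μ‖ ^ 2 - 2 * max (G - c) 0 ^ 2
      ≤ ⟪∫ z, g z ∂μ, ∫ z, clip c (g z) ∂μ⟫ := by
  set M : ℝ := max (G - c) 0 with hM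
  have hM0 : 0 ≤ M := le_max_right _ _
  -- measurability of clipped function
  have hsm : StronglyMeasurable (fun z => clip c (g z)) := by
    have : (fun z => clip c (g z)) = fun z => min 1 (c / ‖g z‖) • g z := by
      funext z; exact clip_eq_smul c (g z)
    rw [this]
    exact StronglyMeasurable.smul
      ((measurable_const.min (measurable_const.div hg.measurable.norm)).stronglyMeasurable) hg
  -- integrability
  have hgi : Integrable g μ :=
    Integrable.mono' (integrable_const G) hg.aestronglyMeasurable hbd
  have hci : Integrable (fun z => clip c (g z)) μ :=
    Integrable.mono' (integrable_const G) hsm.aestronglyMeasurable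
      (hbd.mono fun z hz => le_trans (norm_clip_le hc (g z)) hz)
  set u := ∫ z, g z ∂μ with hu
  set w := ∫ z, clip c (g z) ∂μ with hw
  -- bound on ‖w - u‖
  have hdiff : ∀ᵐ z ∂μ, ‖clip c (g z) - g z‖ ≤ M := by
    refine hbd.mono fun z hz => ?_
    refine le_trans (norm_clip_sub hc (g z)) ?_
    exact max_le_max (by linarith) le_rfl
  have hwu : w - u = ∫ z, (clip c (g z) - g z) ∂μ := by
    rw [integral_sub hci hgi]
  have hnorm : ‖w - u‖ ≤ M := by
    rw [hwu]
    calc ‖∫ z, (clip c (g z) - g z) ∂μ‖ ≤ M * (μ Set.univ).toReal :=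
          norm_integral_le_of_norm_le_const hdiff
      _ = M := by simp
  -- inner product manipulation
  have key : ⟪u, w⟫ = ‖u‖ ^ 2 + ⟪u, w - u⟫ := by
    rw [inner_sub_right, real_inner_self_eq_norm_sq]
    ring
  have hib : -(‖u‖ * M) ≤ ⟪u, w - u⟫ := by
    have h1 : |⟪u, w - u⟫| ≤ ‖u‖ * ‖w - u‖ := abs_real_inner_le_norm u (w - u)
    have h2 : ‖u‖ * ‖w - u‖ ≤ ‖u‖ * M :=
      mul_le_mul_of_nonneg_left hnorm (norm_nonneg u)
    have := neg_abs_le ⟪u, w - u⟫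
    linarith
  rw [key]
  nlinarith [sq_nonneg (‖u‖ - M), sq_nonneg M, norm_nonneg u]
end
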